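/- Let β > 0 and μ ∈ ℝ. Then lim_{Λ→∞} (1/Λ) Σ_{k=1}^∞ ln(1 + e^{β(μ − π²k²/Λ²)}) = (1/π) ∫_0^∞ ln(1 + e^{β(μ−p²)}) dp. -/

import Mathlib

open Real Filter

open MeasureTheory in
private lemma riemann_lower (f : ℝ → ℝ) (hanti : AntitoneOn f (Set.Ici 0))
    (hnn : ∀ x, 0 ≤ f x) (hint : IntegrableOn f (Set.Ioi 0))
    {h : ℝ} (hh : 0 < h) (n : ℕ) :
    ∑ i ∈ Finset.range n, h * f (h * (i + 1)) ≤ ∫ p in Set.Ioi (0:ℝ), f p := by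
  have hg : AntitoneOn (fun x => f (h * x)) (Set.Icc (0:ℝ) (0 + n)) := by
    intro a ha b hb hab
    exact hanti (by simpa using mul_nonneg hh.le ha.1) (by simpa using mul_nonneg hh.le hb.1)
      (by nlinarith)
  have key := AntitoneOn.sum_le_integral (x₀ := 0) (a := n) hg
  simp only [zero_add] at key
  have hcomp : (∫ x in (0:ℝ)..(n:ℝ), f (h * x)) = h⁻¹ • ∫ x in (0:ℝ)..(h * n), f x := by
    rw [intervalIntegral.integral_comp_mul_left f hh.ne', mul_zero]
  have hIoc : (∫ x in (0:ℝ)..(h * n), f x) ≤ ∫ p in Set.Ioi (0:ℝ), f p := by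
    rw [intervalIntegral.integral_of_le (by positivity)]
    refine setIntegral_mono_set hint ?_ ?_
    · exact Filter.Eventually.of_forall fun x => hnn x
    · exact HasSubset.Subset.eventuallyLE Set.Ioc_subset_Ioi_self
  have : ∑ i ∈ Finset.range n, f (h * ((i:ℝ) + 1)) ≤ h⁻¹ * ∫ p in Set.Ioi (0:ℝ), f p := by
    calc ∑ i ∈ Finset.range n, f (h * ((i:ℝ) + 1)) ≤ ∫ x in (0:ℝ)..(n:ℝ), f (h * x) := by
          convert key using 2 with i; push_cast; ring_nf
      _ = h⁻¹ * ∫ x in (0:ℝ)..(h * n), f x := by rw [hcomp]; simp [smul_eq_mul]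
      _ ≤ h⁻¹ * ∫ p in Set.Ioi (0:ℝ), f p := by
          exact mul_le_mul_of_nonneg_left hIoc (by positivity)
  calc ∑ i ∈ Finset.range n, h * f (h * (i + 1))
      = h * ∑ i ∈ Finset.range n, f (h * ((i:ℝ) + 1)) := by rw [Finset.mul_sum]
    _ ≤ h * (h⁻¹ * ∫ p in Set.Ioi (0:ℝ), f p) := mul_le_mul_of_nonneg_left this hh.le
    _ = ∫ p in Set.Ioi (0:ℝ), f p := by field_simp

open MeasureTheory in
private lemma riemann_summable (f : ℝ → ℝ) (hanti : AntitoneOn f (Set.Ici 0))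
    (hnn : ∀ x, 0 ≤ f x) (hint : IntegrableOn f (Set.Ioi 0))
    {h : ℝ} (hh : 0 < h) :
    Summable (fun n : ℕ => f (h * (n + 1))) := by
  have := fun n => riemann_lower f hanti hnn hint hh n
  have hs : Summable (fun n : ℕ => h * f (h * (n + 1))) :=
    summable_of_sum_range_le (fun n => mul_nonneg hh.le (hnn _)) this
  have := hs.mul_left h⁻¹
  simpa [← mul_assoc, inv_mul_cancel₀ hh.ne'] using this

open MeasureTheory in
private lemma riemann_tsum_le (f : ℝ → ℝ) (hanti : AntitoneOn f (Set.Ici 0))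
    (hnn : ∀ x, 0 ≤ f x) (hint : IntegrableOn f (Set.Ioi 0))
    {h : ℝ} (hh : 0 < h) :
    h * ∑' n : ℕ, f (h * (n + 1)) ≤ ∫ p in Set.Ioi (0:ℝ), f p := by
  have hs : Summable (fun n : ℕ => h * f (h * (n + 1))) :=
    (riemann_summable f hanti hnn hint hh).mul_left h
  have := tsum_le_of_sum_range_le (f := fun n : ℕ => h * f (h * (n + 1)))
    (fun n => mul_nonneg hh.le (hnn _)) (riemann_lower f hanti hnn hint hh)
  calc h * ∑' n : ℕ, f (h * (n + 1)) = ∑' n : ℕ, h * f (h * (n + 1)) := by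
        rw [tsum_mul_left]
    _ ≤ _ := this

open MeasureTheory in
private lemma riemann_le_tsum (f : ℝ → ℝ) (hanti : AntitoneOn f (Set.Ici 0))
    (hnn : ∀ x, 0 ≤ f x) (hint : IntegrableOn f (Set.Ioi 0))
    {h : ℝ} (hh : 0 < h) :
    (∫ p in Set.Ioi (0:ℝ), f p) ≤ h * f 0 + h * ∑' n : ℕ, f (h * (n + 1)) := by
  have hsum : Summable (fun n : ℕ => f (h * (n + 1))) :=
    riemann_summable f hanti hnn hint hh
  -- for each n, ∫ 0..h(n+1) f ≤ h * (f 0 + Σ_{i<n} f(h(i+1)))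
  have step : ∀ n : ℕ, (∫ x in (0:ℝ)..(h * (n+1)), f x) ≤ h * f 0 + h * ∑' m : ℕ, f (h * (m + 1)) := by
    intro n
    have hg : AntitoneOn (fun x => f (h * x)) (Set.Icc (0:ℝ) (0 + (n+1:ℕ))) := by
      intro a ha b hb hab
      exact hanti (by simpa using mul_nonneg hh.le ha.1) (by simpa using mul_nonneg hh.le hb.1)
        (by nlinarith)
    have key := AntitoneOn.integral_le_sum (x₀ := 0) (a := n+1) hg
    simp only [zero_add] at key
    have hcomp : (∫ x in (0:ℝ)..((n+1:ℕ):ℝ), f (h * x)) = h⁻¹ • ∫ x in (0:ℝ)..(h * (n+1)), f x := by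
      rw [intervalIntegral.integral_comp_mul_left f hh.ne', mul_zero]
      norm_num
    rw [hcomp] at key
    have key2 : (∫ x in (0:ℝ)..(h * (n+1)), f x) ≤ h * ∑ i ∈ Finset.range (n+1), f (h * i) := by
      have := mul_le_mul_of_nonneg_left key hh.le
      rw [smul_eq_mul, ← mul_assoc, mul_inv_cancel₀ hh.ne', one_mul] at this
      exact this
    refine key2.trans ?_
    rw [Finset.sum_range_succ']
    have htail : ∑ i ∈ Finset.range n, f (h * ((i:ℝ) + 1)) ≤ ∑' m : ℕ, f (h * (m + 1)) := by
      exact Summable.sum_le_tsum (Finset.range n) (fun m _ => hnn _) hsum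
    push_cast
    rw [mul_zero]
    nlinarith [mul_le_mul_of_nonneg_left htail hh.le]
  have hb : Tendsto (fun n : ℕ => h * ((n:ℝ)+1)) atTop atTop := by
    apply Filter.Tendsto.const_mul_atTop hh
    exact tendsto_atTop_add_const_right _ 1 tendsto_natCast_atTop_atTop
  have hlim := intervalIntegral_tendsto_integral_Ioi 0 hint hb
  exact le_of_tendsto hlim (Filter.Eventually.of_forall step)

/-- Thermodynamic limit of the free Fermi gas pressure:
`lim_{Λ→∞} (1/Λ) Σ_{k=1}^∞ ln(1 + e^{β(μ−π²k²/Λ²)}) = (1/π) ∫_0^∞ ln(1 + e^{β(μ−p²)}) dp`. -/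
theorem stmt_16 (β μ : ℝ) (hβ : 0 < β) :
    Tendsto (fun Λ : ℝ =>
        (1 / Λ) * ∑' k : ℕ+, Real.log (1 + Real.exp (β * (μ - π ^ 2 * (k : ℕ) ^ 2 / Λ ^ 2))))
      atTop
      (nhds ((1 / π) * ∫ p in Set.Ioi (0 : ℝ), Real.log (1 + Real.exp (β * (μ - p ^ 2))))) := by
  set f : ℝ → ℝ := fun p => Real.log (1 + Real.exp (β * (μ - p ^ 2))) with hf
  have hpos : ∀ p, (0:ℝ) < 1 + Real.exp (β * (μ - p ^ 2)) := fun p => by positivity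
  have hnn : ∀ p, 0 ≤ f p := fun p =>
    Real.log_nonneg (le_add_of_nonneg_right (Real.exp_pos _).le)
  have hanti : AntitoneOn f (Set.Ici 0) := by
    intro a ha b hb hab
    apply Real.log_le_log (hpos b)
    have : a ^ 2 ≤ b ^ 2 := by nlinarith [ha.out]
    have : β * (μ - b ^ 2) ≤ β * (μ - a ^ 2) := by nlinarith
    exact add_le_add_right (Real.exp_le_exp.mpr this) 1
  have hcont : Continuous f := by
    apply Continuous.log
    · fun_prop
    · exact fun p => (hpos p).ne'
  have hint : MeasureTheory.IntegrableOn f (Set.Ioi 0) := by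
    have hg : MeasureTheory.Integrable (fun p : ℝ => Real.exp (β * μ) * Real.exp (-β * p ^ 2)) :=
      (integrable_exp_neg_mul_sq hβ).const_mul _
    refine (hg.mono' hcont.aestronglyMeasurable ?_).integrableOn
    refine Filter.Eventually.of_forall fun p => ?_
    rw [Real.norm_of_nonneg (hnn p), ← Real.exp_add]
    have h1 : f p ≤ Real.exp (β * (μ - p ^ 2)) := by
      have h2 := Real.log_le_sub_one_of_pos (hpos p)
      have h3 : f p = Real.log (1 + Real.exp (β * (μ - p ^ 2))) := rfl
      linarith
    calc f p ≤ Real.exp (β * (μ - p ^ 2)) := h1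
      _ = Real.exp (β * μ + -β * p ^ 2) := by congr 1; ring
  set I : ℝ := ∫ p in Set.Ioi (0 : ℝ), f p with hI
  -- rewrite summand
  have hsummand : ∀ Λ : ℝ, 0 < Λ → ∀ k : ℕ+,
      Real.log (1 + Real.exp (β * (μ - π ^ 2 * (k : ℕ) ^ 2 / Λ ^ 2))) = f ((π / Λ) * k) := by
    intro Λ hΛ k
    have harg : π ^ 2 * ((k:ℕ):ℝ) ^ 2 / Λ ^ 2 = ((π / Λ) * ((k:ℕ):ℝ)) ^ 2 := by ring
    simp only [hf, harg]
  have htsum : ∀ Λ : ℝ, 0 < Λ →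
      (∑' k : ℕ+, Real.log (1 + Real.exp (β * (μ - π ^ 2 * (k : ℕ) ^ 2 / Λ ^ 2))))
        = ∑' n : ℕ, f ((π / Λ) * (n + 1)) := by
    intro Λ hΛ
    have e1 : (∑' k : ℕ+, Real.log (1 + Real.exp (β * (μ - π ^ 2 * (k : ℕ) ^ 2 / Λ ^ 2))))
        = ∑' k : ℕ+, f ((π / Λ) * k) :=
      tsum_congr fun k => hsummand Λ hΛ k
    rw [e1, ← Equiv.pnatEquivNat.symm.tsum_eq (fun k : ℕ+ => f ((π / Λ) * k))]
    apply tsum_congr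
    intro n
    simp [Equiv.pnatEquivNat, Nat.succPNat]
  have hππ : (0:ℝ) < π := Real.pi_pos
  -- squeeze
  have hup : ∀ᶠ Λ : ℝ in atTop, (1 / Λ) * ∑' k : ℕ+,
      Real.log (1 + Real.exp (β * (μ - π ^ 2 * (k : ℕ) ^ 2 / Λ ^ 2))) ≤ (1 / π) * I := by
    filter_upwards [eventually_gt_atTop (0:ℝ)] with Λ hΛ
    have hh : 0 < π / Λ := by positivity
    rw [htsum Λ hΛ]
    have := riemann_tsum_le f hanti hnn hint hh
    rw [← hI] at this
    calc (1 / Λ) * ∑' n : ℕ, f ((π / Λ) * (n + 1))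
        = (1 / π) * ((π / Λ) * ∑' n : ℕ, f ((π / Λ) * (n + 1))) := by
          field_simp
      _ ≤ (1 / π) * I := by
          exact mul_le_mul_of_nonneg_left this (by positivity)
  have hlo : ∀ᶠ Λ : ℝ in atTop, (1 / π) * I - (f 0) / Λ ≤ (1 / Λ) * ∑' k : ℕ+,
      Real.log (1 + Real.exp (β * (μ - π ^ 2 * (k : ℕ) ^ 2 / Λ ^ 2))) := by
    filter_upwards [eventually_gt_atTop (0:ℝ)] with Λ hΛ
    have hh : 0 < π / Λ := by positivity
    rw [htsum Λ hΛ]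
    have := riemann_le_tsum f hanti hnn hint hh
    rw [← hI] at this
    have h2 : (1 / π) * (I - (π / Λ) * f 0) ≤
        (1 / π) * ((π / Λ) * ∑' n : ℕ, f ((π / Λ) * (n + 1))) := by
      apply mul_le_mul_of_nonneg_left _ (by positivity)
      linarith
    calc (1 / π) * I - (f 0) / Λ = (1 / π) * (I - (π / Λ) * f 0) := by field_simp
      _ ≤ (1 / π) * ((π / Λ) * ∑' n : ℕ, f ((π / Λ) * (n + 1))) := h2
      _ = (1 / Λ) * ∑' n : ℕ, f ((π / Λ) * (n + 1)) := by field_simp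
  have hlolim : Tendsto (fun Λ : ℝ => (1 / π) * I - (f 0) / Λ) atTop (nhds ((1 / π) * I)) := by
    have : Tendsto (fun Λ : ℝ => (f 0) / Λ) atTop (nhds 0) :=
      tendsto_const_nhds.div_atTop tendsto_id
    simpa using tendsto_const_nhds.sub this
  exact tendsto_of_tendsto_of_tendsto_of_le_of_le' hlolim tendsto_const_nhds hlo hup
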